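/- For a > 0, b > 0, I > 0 and the turning points r₋ < r₊ defined by r_± = √(2/b)(√(I+a) ± √I), the action integral (1/π)∫_{r₋}^{r₊} (b/(2ρ))·√((r₊² − ρ²)(ρ² − r₋²)) dρ equals I = (b/8)(r₊ − r₋)². -/

import Mathlib

open Real Set intervalIntegral

private noncomputable def Fant (A B : ℝ) (ρ : ℝ) : ℝ :=
  (1/2) * (Real.sqrt ((A - ρ^2) * (ρ^2 - B))
    + ((A+B)/2) * Real.arcsin ((2*ρ^2 - (A+B))/(A - B))
    - Real.sqrt (A*B) * Real.arcsin (((A+B)*ρ^2 - 2*(A*B))/(ρ^2*(A-B))))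

private lemma hasDeriv_Fant (A B x : ℝ) (hB : 0 < B) (hBA : B < A)
    (hxl : Real.sqrt B < x) (hxr : x < Real.sqrt A) :
    HasDerivAt (Fant A B) ((1/x) * Real.sqrt ((A - x^2) * (x^2 - B))) x := by
  have hA : 0 < A := hB.trans hBA
  have hsB : 0 < Real.sqrt B := Real.sqrt_pos.2 hB
  have hx0 : 0 < x := hsB.trans hxl
  have hBu : B < x^2 := by
    have := Real.sq_sqrt hB.le
    nlinarith [Real.sqrt_nonneg B]
  have huA : x^2 < A := by
    have := Real.sq_sqrt hA.le
    nlinarith [Real.sqrt_nonneg A]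
  have hP : 0 < (A - x^2) * (x^2 - B) := by nlinarith
  set sP := Real.sqrt ((A - x^2) * (x^2 - B)) with hsPdef
  have hsP : 0 < sP := Real.sqrt_pos.2 hP
  have hsP2 : sP^2 = (A - x^2) * (x^2 - B) := Real.sq_sqrt hP.le
  have hABpos : 0 < A - B := by linarith
  have hs : 0 < Real.sqrt (A*B) := Real.sqrt_pos.2 (by positivity)
  have hs2 : Real.sqrt (A*B) ^ 2 = A*B := Real.sq_sqrt (by positivity)
  have hx2d : HasDerivAt (fun ρ:ℝ => ρ^2) (2*x) x := by
    simpa using hasDerivAt_pow 2 x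
  -- term 1
  have hPd : HasDerivAt (fun ρ => (A - ρ^2) * (ρ^2 - B))
      ((0 - 2*x) * (x^2 - B) + (A - x^2) * (2*x)) x := by
    exact ((hasDerivAt_const x A).sub hx2d).mul (hx2d.sub_const B)
  have h1 : HasDerivAt (fun ρ => Real.sqrt ((A - ρ^2) * (ρ^2 - B)))
      (((0 - 2*x) * (x^2 - B) + (A - x^2) * (2*x)) / (2 * sP)) x :=
    hPd.sqrt (ne_of_gt hP)
  -- term 2
  have hi2 : HasDerivAt (fun ρ:ℝ => (2*ρ^2 - (A+B))/(A - B)) ((2*(2*x))/(A-B)) x := by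
    exact ((hx2d.const_mul 2).sub_const (A+B)).div_const (A-B)
  set y2 := (2*x^2 - (A+B))/(A - B) with hy2def
  have hy2lt : y2 < 1 := by
    rw [hy2def, div_lt_one hABpos]; linarith
  have hy2gt : -1 < y2 := by
    rw [hy2def, lt_div_iff₀ hABpos]; linarith
  have hsq2 : Real.sqrt (1 - y2^2) = 2*sP/(A-B) := by
    have h4 : (2*sP/(A-B))^2 = 4*((A-x^2)*(x^2-B))/(A-B)^2 := by
      rw [div_pow, mul_pow, hsP2]; norm_num
    have e2 : 1 - y2^2 = (2*sP/(A-B))^2 := by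
      rw [h4, hy2def]
      field_simp
      ring
    rw [e2, Real.sqrt_sq (by positivity)]
  have harc2 : HasDerivAt (fun ρ:ℝ => Real.arcsin ((2*ρ^2 - (A+B))/(A - B)))
      ((1 / (2*sP/(A-B))) * ((2*(2*x))/(A-B))) x := by
    have := (Real.hasDerivAt_arcsin (ne_of_gt hy2gt) (ne_of_lt hy2lt)).comp x hi2
    simpa [Function.comp_def, hsq2] using this
  -- term 3
  have hdx : x^2 * (A-B) ≠ 0 := by positivity
  have hi3 : HasDerivAt (fun ρ:ℝ => ((A+B)*ρ^2 - 2*(A*B))/(ρ^2*(A-B)))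
      (((A+B)*(2*x) * (x^2*(A-B)) - ((A+B)*x^2 - 2*(A*B)) * ((2*x)*(A-B))) / (x^2*(A-B))^2)
      x := by
    exact ((hx2d.const_mul (A+B)).sub_const (2*(A*B))).div (hx2d.mul_const (A-B)) hdx
  set y3 := ((A+B)*x^2 - 2*(A*B))/(x^2*(A-B)) with hy3def
  have hd3pos : 0 < x^2 * (A-B) := by positivity
  have hy3lt : y3 < 1 := by
    rw [hy3def, div_lt_one hd3pos]; nlinarith
  have hy3gt : -1 < y3 := by
    rw [hy3def, lt_div_iff₀ hd3pos]; nlinarith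
  have hsq3 : Real.sqrt (1 - y3^2) = 2*Real.sqrt (A*B)*sP/((A-B)*x^2) := by
    have h4 : (2*Real.sqrt (A*B)*sP/((A-B)*x^2))^2
        = 4*(A*B)*((A-x^2)*(x^2-B))/((A-B)^2*(x^2)^2) := by
      rw [div_pow, mul_pow, mul_pow, hsP2, hs2, mul_pow]; ring
    have e3 : 1 - y3^2 = (2*Real.sqrt (A*B)*sP/((A-B)*x^2))^2 := by
      rw [h4, hy3def]
      field_simp
      ring
    rw [e3, Real.sqrt_sq (by positivity)]
  have harc3 : HasDerivAt (fun ρ:ℝ => Real.arcsin (((A+B)*ρ^2 - 2*(A*B))/(ρ^2*(A-B))))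
      ((1 / (2*Real.sqrt (A*B)*sP/((A-B)*x^2))) *
        (((A+B)*(2*x) * (x^2*(A-B)) - ((A+B)*x^2 - 2*(A*B)) * ((2*x)*(A-B))) / (x^2*(A-B))^2))
      x := by
    have := (Real.hasDerivAt_arcsin (ne_of_gt hy3gt) (ne_of_lt hy3lt)).comp x hi3
    simpa [Function.comp_def, hsq3] using this
  -- assemble
  have hF : HasDerivAt (Fant A B)
      ((1/2) * ((((0 - 2*x) * (x^2 - B) + (A - x^2) * (2*x)) / (2 * sP))
        + ((A+B)/2) * ((1 / (2*sP/(A-B))) * ((2*(2*x))/(A-B)))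
        - Real.sqrt (A*B) * ((1 / (2*Real.sqrt (A*B)*sP/((A-B)*x^2))) *
          (((A+B)*(2*x) * (x^2*(A-B)) - ((A+B)*x^2 - 2*(A*B)) * ((2*x)*(A-B))) / (x^2*(A-B))^2))))
      x := by
    exact ((h1.add (harc2.const_mul ((A+B)/2))).sub (harc3.const_mul (Real.sqrt (A*B)))).const_mul (1/2)
  convert hF using 1
  rw [show (1:ℝ)/x*sP = ((A-x^2)*(x^2-B))/(x*sP) from by rw [← hsP2]; field_simp]
  field_simp
  ring

private lemma key_integral (A B : ℝ) (hB : 0 < B) (hBA : B < A) :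
    ∫ ρ in Real.sqrt B..Real.sqrt A, (1/ρ) * Real.sqrt ((A - ρ^2) * (ρ^2 - B))
      = Real.pi/4 * (Real.sqrt A - Real.sqrt B)^2 := by
  have hA : 0 < A := hB.trans hBA
  have hsB : 0 < Real.sqrt B := Real.sqrt_pos.2 hB
  have hsBA : Real.sqrt B < Real.sqrt A := Real.sqrt_lt_sqrt hB.le hBA
  have hABpos : 0 < A - B := by linarith
  have hcont : ContinuousOn (Fant A B) (Set.Icc (Real.sqrt B) (Real.sqrt A)) := by
    have hne : ∀ ρ ∈ Set.Icc (Real.sqrt B) (Real.sqrt A), ρ^2*(A-B) ≠ 0 := by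
      intro ρ hρ
      have : 0 < ρ := hsB.trans_le hρ.1
      positivity
    unfold Fant
    apply ContinuousOn.mul continuousOn_const
    apply ContinuousOn.sub
    · apply ContinuousOn.add
      · exact (Real.continuous_sqrt.comp (by continuity)).continuousOn
      · exact ContinuousOn.mul continuousOn_const
          (Real.continuous_arcsin.comp_continuousOn
            ((by continuity : Continuous fun ρ:ℝ => 2*ρ^2 - (A+B)).continuousOn.div_const _))
    · exact ContinuousOn.mul continuousOn_const
        (Real.continuous_arcsin.comp_continuousOn
          (ContinuousOn.div (by continuity : Continuous fun ρ:ℝ => (A+B)*ρ^2 - 2*(A*B)).continuousOn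
            (by continuity : Continuous fun ρ:ℝ => ρ^2*(A-B)).continuousOn hne))
  have hint : IntervalIntegrable (fun ρ => (1/ρ) * Real.sqrt ((A - ρ^2) * (ρ^2 - B)))
      MeasureTheory.volume (Real.sqrt B) (Real.sqrt A) := by
    apply ContinuousOn.intervalIntegrable
    rw [Set.uIcc_of_le hsBA.le]
    apply ContinuousOn.mul
    · exact ContinuousOn.div continuousOn_const continuousOn_id
        (fun ρ hρ => (hsB.trans_le hρ.1).ne')
    · exact (Real.continuous_sqrt.comp (by continuity)).continuousOn
  have := intervalIntegral.integral_eq_sub_of_hasDeriv_right_of_le hsBA.le hcont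
    (fun x hx => (hasDeriv_Fant A B x hB hBA hx.1 hx.2).hasDerivWithinAt) hint
  rw [this]
  -- endpoint values
  have hsqA : Real.sqrt A ^ 2 = A := Real.sq_sqrt hA.le
  have hsqB : Real.sqrt B ^ 2 = B := Real.sq_sqrt hB.le
  have hFA : Fant A B (Real.sqrt A) = (1/2) * (((A+B)/2) * (Real.pi/2) - Real.sqrt (A*B) * (Real.pi/2)) := by
    unfold Fant
    rw [hsqA]
    have e1 : (2*A - (A+B))/(A - B) = 1 := by
      rw [div_eq_one_iff_eq hABpos.ne']; ring
    have e2 : ((A+B)*A - 2*(A*B))/(A*(A-B)) = 1 := by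
      rw [div_eq_one_iff_eq (by positivity)]; ring
    rw [e1, e2, Real.arcsin_one]
    simp
  have hFB : Fant A B (Real.sqrt B) = (1/2) * (((A+B)/2) * (-(Real.pi/2)) - Real.sqrt (A*B) * (-(Real.pi/2))) := by
    unfold Fant
    rw [hsqB]
    have e1 : (2*B - (A+B))/(A - B) = -1 := by
      rw [div_eq_iff hABpos.ne']; ring
    have e2 : ((A+B)*B - 2*(A*B))/(B*(A-B)) = -1 := by
      rw [div_eq_iff (by positivity : (B*(A-B)) ≠ 0)]; ring
    rw [e1, e2, Real.arcsin_neg_one]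
    simp
  rw [hFA, hFB]
  have hmul : Real.sqrt A * Real.sqrt B = Real.sqrt (A*B) := (Real.sqrt_mul hA.le B).symm
  have : (Real.sqrt A - Real.sqrt B)^2 = A + B - 2 * Real.sqrt (A*B) := by
    rw [sub_sq, hsqA, hsqB, mul_assoc, hmul]; ring
  rw [this]; ring

/-- The action integral for the radial Hamiltonian:
`(1/π)∫_{r₋}^{r₊} (b/(2ρ))·√((r₊² − ρ²)(ρ² − r₋²)) dρ = (b/8)(r₊ − r₋)² = I`. -/
theorem action_integral (a b I : ℝ) (ha : 0 < a) (hb : 0 < b) (hI : 0 < I) :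
    let rp := Real.sqrt (2 / b) * (Real.sqrt (I + a) + Real.sqrt I)
    let rm := Real.sqrt (2 / b) * (Real.sqrt (I + a) - Real.sqrt I)
    (1 / Real.pi) * ∫ ρ in rm..rp,
        (b / (2 * ρ)) * Real.sqrt ((rp ^ 2 - ρ ^ 2) * (ρ ^ 2 - rm ^ 2))
      = (b / 8) * (rp - rm) ^ 2 ∧
    (b / 8) * (rp - rm) ^ 2 = I := by
  intro rp rm
  have h2b : 0 < (2:ℝ)/b := by positivity
  have hs2b : 0 < Real.sqrt (2/b) := Real.sqrt_pos.2 h2b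
  have hsIa : Real.sqrt I < Real.sqrt (I + a) := Real.sqrt_lt_sqrt hI.le (by linarith)
  have hsI : 0 < Real.sqrt I := Real.sqrt_pos.2 hI
  have hrm : 0 < rm := by
    have : 0 < Real.sqrt (I+a) - Real.sqrt I := by linarith
    exact mul_pos hs2b this
  have hrp : rm < rp := by
    have : Real.sqrt (I+a) - Real.sqrt I < Real.sqrt (I+a) + Real.sqrt I := by linarith
    exact mul_lt_mul_of_pos_left this hs2b
  have hrp0 : 0 < rp := hrm.trans hrp
  have hB : 0 < rm^2 := by positivity
  have hBA : rm^2 < rp^2 := by nlinarith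
  have hsqrp : Real.sqrt (rp^2) = rp := Real.sqrt_sq hrp0.le
  have hsqrm : Real.sqrt (rm^2) = rm := Real.sqrt_sq hrm.le
  have hkey := key_integral (rp^2) (rm^2) hB hBA
  rw [hsqrp, hsqrm] at hkey
  have hrw : ∀ ρ : ℝ, (b / (2 * ρ)) * Real.sqrt ((rp ^ 2 - ρ ^ 2) * (ρ ^ 2 - rm ^ 2))
      = (b/2) * ((1/ρ) * Real.sqrt ((rp ^ 2 - ρ ^ 2) * (ρ ^ 2 - rm ^ 2))) := by
    intro ρ
    rw [← mul_assoc, mul_one_div, div_div]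
  have hIeq : (b / 8) * (rp - rm) ^ 2 = I := by
    have hd : rp - rm = Real.sqrt (2/b) * (2 * Real.sqrt I) := by
      show Real.sqrt (2 / b) * (Real.sqrt (I + a) + Real.sqrt I)
        - Real.sqrt (2 / b) * (Real.sqrt (I + a) - Real.sqrt I) = _
      ring
    rw [hd, mul_pow, Real.sq_sqrt h2b.le, mul_pow, Real.sq_sqrt hI.le]
    field_simp
    ring
  refine ⟨?_, hIeq⟩
  rw [show (∫ ρ in rm..rp, (b / (2 * ρ)) * Real.sqrt ((rp ^ 2 - ρ ^ 2) * (ρ ^ 2 - rm ^ 2)))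
      = ∫ ρ in rm..rp, (b/2) * ((1/ρ) * Real.sqrt ((rp ^ 2 - ρ ^ 2) * (ρ ^ 2 - rm ^ 2))) from by
    simp_rw [hrw]]
  rw [intervalIntegral.integral_const_mul, hkey]
  generalize (rp - rm)^2 = t
  field_simp
  ring
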